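/- Let m₁,…,mₙ ∈ ℤ with gcd(m₁,…,mₙ) = 1 and |m₁| + ⋯ + |mₙ| ≤ M. Then (m₁,…,mₙ) extends to a ℤ-basis (m₁,…,mₙ), (a₂₁,…,a₂ₙ), …, (a_{n1},…,a_{nn}) of ℤⁿ such that |a_{i1}| + ⋯ + |a_{in}| ≤ M + n for each 2 ≤ i ≤ n. -/

import Mathlib

open scoped BigOperators

private lemma gcd_map_emb {α β : Type*} (s : Finset α) (e : α ↪ β) (f : β → ℤ) :
    (s.map e).gcd f = s.gcd (f ∘ e) := by
  simp [Finset.gcd_def, Multiset.map_map]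

private lemma gcd_univ_succ {n : ℕ} (m : Fin (n + 1) → ℤ) :
    (Finset.univ.gcd m) = GCDMonoid.gcd (m 0) (Finset.univ.gcd (fun i : Fin n => m i.succ)) := by
  rw [Fin.univ_succ, Finset.cons_eq_insert, Finset.gcd_insert, gcd_map_emb]
  rfl

private lemma finset_gcd_nonneg {α : Type*} (s : Finset α) (f : α → ℤ) : 0 ≤ s.gcd f := by
  calc (0 : ℤ) ≤ |s.gcd f| := abs_nonneg _
    _ = s.gcd f := by rw [Int.abs_eq_normalize, Finset.normalize_gcd]

private lemma key : ∀ (n : ℕ) (m : Fin (n + 1) → ℤ), Finset.univ.gcd m = 1 →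
    ∃ A : Matrix (Fin (n + 1)) (Fin (n + 1)) ℤ,
      (A.det = 1 ∨ A.det = -1) ∧ A 0 = m ∧
      ∀ i, i ≠ 0 → ∑ j, |A i j| ≤ (∑ j, |m j|) + n := by
  intro n
  induction n with
  | zero =>
    intro m hgcd
    have h1 : |m 0| = 1 := by
      have : normalize (m 0) = 1 := by
        simpa [Fin.univ_succ] using hgcd
      rw [Int.abs_eq_normalize, this]
    refine ⟨Matrix.of fun _ _ => m 0, ?_, ?_, ?_⟩
    · rcases (abs_eq (by norm_num)).mp h1 with h | h
      · left; simp [Matrix.det_fin_one, h]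
      · right; simp [Matrix.det_fin_one, h]
    · funext j; rw [Fin.eq_zero j]; rfl
    · intro i hi; exact absurd (Fin.eq_zero i) hi
  | succ n IH =>
    intro m hgcd
    set t : Fin (n + 1) → ℤ := fun i => m i.succ with ht
    set g : ℤ := Finset.univ.gcd t with hgdef
    have hmg : GCDMonoid.gcd (m 0) g = 1 := by rw [← gcd_univ_succ]; exact hgcd
    by_cases hg0 : g = 0
    · -- tail is zero, m 0 = ±1
      have htz : ∀ i, t i = 0 := fun i => Finset.gcd_eq_zero_iff.mp hg0 i (Finset.mem_univ i)
      have h1 : |m 0| = 1 := by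
        have : normalize (m 0) = 1 := by
          rw [hg0, gcd_zero_right] at hmg; exact hmg
        rw [Int.abs_eq_normalize, this]
      refine ⟨Matrix.diagonal (fun i => if i = 0 then m 0 else 1), ?_, ?_, ?_⟩
      · rw [Matrix.det_diagonal]
        rcases (abs_eq (by norm_num)).mp h1 with h | h
        · left; simp [Finset.prod_ite_eq', h]
        · right; simp [Finset.prod_ite_eq', h]
      · funext j
        rcases Fin.eq_zero_or_eq_succ j with rfl | ⟨k, rfl⟩
        · simp [Matrix.diagonal]
        · simp only [Matrix.diagonal, Matrix.of_apply, if_neg (Fin.succ_ne_zero k).symm,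
            if_neg (Fin.succ_ne_zero k)]
          exact (htz k).symm
      · intro i hi
        have : ∑ j, |Matrix.diagonal (fun i : Fin (n+2) => if i = 0 then m 0 else 1) i j| = 1 := by
          rw [Finset.sum_eq_single i]
          · simp [Matrix.diagonal, hi]
          · intro j _ hj; simp [Matrix.diagonal, Ne.symm hj]
          · intro h; exact absurd (Finset.mem_univ i) h
        rw [this]
        have h2 : (0 : ℤ) ≤ ∑ j, |m j| := Finset.sum_nonneg fun j _ => abs_nonneg _
        have h3 : (0 : ℤ) ≤ (n : ℤ) := Int.natCast_nonneg n
        push_cast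
        linarith
    · -- main case
      have hgpos : 0 < g := lt_of_le_of_ne (finset_gcd_nonneg _ _) (Ne.symm hg0)
      have hdvd : ∀ i, g ∣ t i := fun i => Finset.gcd_dvd (Finset.mem_univ i)
      set m' : Fin (n + 1) → ℤ := fun i => t i / g with hm'def
      have htm : ∀ i, t i = g * m' i := fun i => (Int.mul_ediv_cancel' (hdvd i)).symm
      have hm' : Finset.univ.gcd m' = 1 := by
        obtain ⟨i0, hi0⟩ : ∃ i, t i ≠ 0 := by
          by_contra h
          push_neg at h
          exact hg0 (Finset.gcd_eq_zero_iff.mpr fun i _ => h i)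
        exact Finset.gcd_div_eq_one (f := t) (Finset.mem_univ i0) hi0
      obtain ⟨B, hBdet, hB0, hBrow⟩ := IH m' hm'
      -- Bezout with controlled size
      obtain ⟨u, v, huv⟩ : IsCoprime (m 0) g := by
        rw [Int.isCoprime_iff_gcd_eq_one]
        have := Int.coe_gcd (m 0) g
        rw [hmg] at this
        exact_mod_cast this
      set k : ℤ := (-u) / g with hk
      set a : ℤ := (-u) % g with ha
      set b : ℤ := v - m 0 * k with hb
      have hae : a = -u - g * k := by rw [ha, hk, Int.emod_def]
      have hab : g * b - m 0 * a = 1 := by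
        rw [hae, hb]; linear_combination huv
      have ha0 : 0 ≤ a := Int.emod_nonneg _ hg0
      have hag : a < g := Int.emod_lt_of_pos _ hgpos
      -- the matrix
      set w : Fin (n + 1) → ℤ := fun i => if i = 0 then a else 1 with hw
      set c : Fin (n + 1) → ℤ := fun i => if i = 0 then b else 0 with hc
      set A : Matrix (Fin (n + 2)) (Fin (n + 2)) ℤ :=
        Matrix.of (Fin.cons m (fun i => Fin.cons (c i) (fun j => w i * B i j))) with hA
      have hA0 : ∀ j, A 0 j = m j := fun j => rfl
      have hAs0 : ∀ i : Fin (n + 1), A i.succ 0 = c i := fun i => by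
        simp [hA, Matrix.of_apply]
      have hAss : ∀ (i j : Fin (n + 1)), A i.succ j.succ = w i * B i j := fun i j => by
        simp [hA, Matrix.of_apply]
      -- determinant
      have hprodw : (∏ i, w i) = a := by
        rw [hw]; simp [Finset.prod_ite_eq']
      have hdetA : A.det = -B.det := by
        rw [Matrix.det_succ_column_zero, Fin.sum_univ_succ, Fin.sum_univ_succ]
        have hz : ∀ i : Fin n, (-1 : ℤ) ^ ((i.succ.succ : Fin (n+2)) : ℕ) * A i.succ.succ 0 *
            (A.submatrix i.succ.succ.succAbove Fin.succ).det = 0 := by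
          intro i
          rw [hAs0, hc]
          simp [Fin.succ_ne_zero]
        rw [Finset.sum_eq_zero fun i _ => hz i, add_zero]
        have hm0 : (A.submatrix ((0 : Fin (n+2)).succAbove) Fin.succ).det = a * B.det := by
          have : A.submatrix ((0 : Fin (n+2)).succAbove) Fin.succ
              = Matrix.of (fun i j => w i * B i j) := by
            ext i j
            rw [Matrix.submatrix_apply, Fin.succAbove_zero]
            exact hAss i j
          rw [this, Matrix.det_mul_column, hprodw]
        have hm1 : (A.submatrix ((1 : Fin (n+2)).succAbove) Fin.succ).det = g * B.det := by
          have : A.submatrix ((1 : Fin (n+2)).succAbove) Fin.succ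
              = Matrix.of (fun i j => (if i = 0 then g else 1) * B i j) := by
            ext i j
            rw [Matrix.submatrix_apply]
            rcases Fin.eq_zero_or_eq_succ i with rfl | ⟨i', rfl⟩
            · have h01 : (1 : Fin (n+2)).succAbove 0 = 0 := Fin.one_succAbove_zero
              rw [h01, hA0]
              simp only [Matrix.of_apply, if_pos rfl, hB0]
              exact htm j
            · have : (1 : Fin (n+2)).succAbove i'.succ = i'.succ.succ := by
                have := Fin.succ_succAbove_succ (0 : Fin (n+1)) i'
                simp only [Fin.succ_zero_eq_one, Fin.succAbove_zero] at this
                exact this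
              rw [this, hAss]
              simp [hw, Fin.succ_ne_zero]
          rw [this, Matrix.det_mul_column]
          congr 1
          simp [Finset.prod_ite_eq']
        have hA00 : A 0 0 = m 0 := hA0 0
        have hA10 : A (0 : Fin (n+1)).succ 0 = b := by rw [hAs0]; simp [hc]
        have hsucc0 : ((0 : Fin (n+1)).succ : Fin (n+2)) = 1 := rfl
        rw [hsucc0] at hA10 ⊢
        rw [hA00, hA10, hm0, hm1]
        simp only [Fin.val_zero, pow_zero, one_mul, Fin.val_one, pow_one]
        linear_combination (-B.det) * hab
      refine ⟨A, ?_, ?_, ?_⟩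
      · rcases hBdet with h | h
        · right; rw [hdetA, h]
        · left; rw [hdetA, h]; ring
      · funext j; exact hA0 j
      · intro i hi
        obtain ⟨i', rfl⟩ := Fin.eq_succ_of_ne_zero hi
        have hS0 : (0 : ℤ) ≤ ∑ j, |m' j| := Finset.sum_nonneg fun j _ => abs_nonneg _
        have hsum : ∑ j, |m j| = |m 0| + g * ∑ j, |m' j| := by
          rw [Fin.sum_univ_succ, Finset.mul_sum]
          congr 1
          refine Finset.sum_congr rfl fun j _ => ?_
          rw [show m j.succ = t j from rfl, htm j, abs_mul, abs_of_pos hgpos]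
        have hrow : ∑ j, |A i'.succ j| = |c i'| + ∑ j, |w i' * B i' j| := by
          simp only [Fin.sum_univ_succ, hAs0, hAss]
        rw [hrow, hsum]
        rcases Fin.eq_zero_or_eq_succ i' with rfl | ⟨i'', rfl⟩
        · -- Bezout row
          have hcb : c 0 = b := by simp [hc]
          have hwb : w 0 = a := by simp [hw]
          have hsum2 : ∑ j, |w 0 * B 0 j| = a * ∑ j, |m' j| := by
            rw [Finset.mul_sum]
            refine Finset.sum_congr rfl fun j _ => ?_
            rw [hwb, hB0, abs_mul, abs_of_nonneg ha0]
          rw [hcb, hsum2]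
          have hbb : |b| ≤ 1 + |m 0| := by
            have h1 : g * b = 1 + m 0 * a := by linarith [hab]
            have h2 : |g * b| ≤ 1 + |m 0| * a := by
              calc |g * b| = |1 + m 0 * a| := by rw [h1]
                _ ≤ |(1:ℤ)| + |m 0 * a| := abs_add_le _ _
                _ = 1 + |m 0| * a := by rw [abs_one, abs_mul, abs_of_nonneg ha0]
            have h3 : g * |b| ≤ 1 + |m 0| * a := by
              rwa [abs_mul, abs_of_pos hgpos] at h2
            nlinarith [abs_nonneg (m 0), abs_nonneg b]
          have hgS : a * ∑ j, |m' j| ≤ g * ∑ j, |m' j| := by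
            apply mul_le_mul_of_nonneg_right (le_of_lt hag) hS0
          have hn1 : (0 : ℤ) ≤ (n : ℤ) := Int.natCast_nonneg n
          push_cast
          linarith
        · -- reused row of B
          have hcz : c i''.succ = 0 := by simp [hc, Fin.succ_ne_zero]
          have hwz : w i''.succ = 1 := by simp [hw, Fin.succ_ne_zero]
          have hsum3 : ∑ j, |w i''.succ * B i''.succ j| = ∑ j, |B i''.succ j| := by
            refine Finset.sum_congr rfl fun j _ => by rw [hwz, one_mul]
          rw [hcz, hsum3, abs_zero, zero_add]
          have hBle := hBrow i''.succ (Fin.succ_ne_zero i'')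
          have hgS : ∑ j, |m' j| ≤ g * ∑ j, |m' j| := by
            nlinarith
          have : (0:ℤ) ≤ |m 0| := abs_nonneg _
          push_cast
          push_cast at hBle
          linarith

/-- A primitive integer vector `m ∈ ℤⁿ` (gcd of the entries `= 1`) with
`‖m‖₁ ≤ M` extends to a ℤ-basis of `ℤⁿ`, i.e. to a matrix `A ∈ GLₙ(ℤ)` with first row
`m`, whose remaining rows all have ℓ¹-norm at most `M + n`. -/
theorem stmt14 (n : ℕ) (hn : 0 < n) (M : ℕ) (m : Fin n → ℤ)
    (hgcd : Finset.univ.gcd m = 1)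
    (hM : ∑ j : Fin n, |m j| ≤ (M : ℤ)) :
    ∃ A : Matrix (Fin n) (Fin n) ℤ,
      (A.det = 1 ∨ A.det = -1) ∧
      A ⟨0, hn⟩ = m ∧
      ∀ i : Fin n, i ≠ ⟨0, hn⟩ → ∑ j : Fin n, |A i j| ≤ (M : ℤ) + n := by
  obtain ⟨n', rfl⟩ : ∃ n', n = n' + 1 := ⟨n - 1, by omega⟩
  obtain ⟨A, h1, h2, h3⟩ := key n' m hgcd
  have h0 : (⟨0, hn⟩ : Fin (n' + 1)) = 0 := rfl
  refine ⟨A, h1, by rw [h0]; exact h2, fun i hi => ?_⟩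
  rw [h0] at hi
  have := h3 i hi
  push_cast
  push_cast at this
  linarith
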